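/- Exact population expectation of the one-step (plug-in) functional: fix an integer k ≥ 1, adopt the core setup and the candidate-nuisance setup with Y_j integrable. Then E_P[ φ̃ ] = Σ_{m=1}^k E_P[ 1_{B_m} ĝ_m^{−1} (Q̄^m − Q̂^m) ] + E_P[ Q̂^1 ], where φ̃ := Σ_{m=1}^k 1_{B_m} ĝ_m^{−1}(Q̂^{m+1} − Q̂^m) + Q̂^1. -/

import Mathlib

open MeasureTheory ProbabilityTheory

/-- Exact population expectation of the one-step (plug-in) functional:
under the core setup and the candidate-nuisance setup (candidate propensities
`ε ≤ phat m ≤ 1` with cumulative products `ghat m`, bounded candidate outcome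
regressions `Qhat m` with `Qhat (k+1) = Y`, and `Qbar m` a `𝒲 m`-measurable version of
`E[Qhat (m+1) | 𝒲 m]` under `P[|B m]`),
`E_P[φ̃] = Σ_{m=1}^k E_P[1_{B m} (ghat m)⁻¹ (Qbar m - Qhat m)] + E_P[Qhat 1]`, where
`φ̃ = Σ_{m=1}^k 1_{B m} (ghat m)⁻¹ (Qhat (m+1) - Qhat m) + Qhat 1`. -/
theorem one_step_population_expectation
    {Ω : Type*} [inst : MeasurableSpace Ω] (P : Measure Ω) [IsProbabilityMeasure P]
    (k : ℕ) (hk : 1 ≤ k)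
    (B : ℕ → Set Ω)
    (hBmeas : ∀ m, m ≤ k → MeasurableSet (B m))
    (hBmono : ∀ m, m < k → B (m + 1) ⊆ B m)
    (hB0 : P (B 0) = 1)
    (hBk : 0 < P (B k))
    (𝒲 : ℕ → MeasurableSpace Ω)
    (h𝒲le : ∀ m, 1 ≤ m → m ≤ k → 𝒲 m ≤ inst)
    (h𝒲mono : ∀ m, 1 ≤ m → m < k → 𝒲 m ≤ 𝒲 (m + 1))
    (ε : ℝ) (hε : 0 < ε)
    (p : ℕ → Ω → ℝ)
    (hpmeas : ∀ m, 1 ≤ m → m ≤ k → Measurable[𝒲 m] (p m))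
    (hpver : ∀ m, 1 ≤ m → m ≤ k →
      p m =ᵐ[P[|B (m - 1)]] (P[|B (m - 1)])[(B m).indicator (fun _ => (1 : ℝ))|𝒲 m])
    (hppos : ∀ m, 1 ≤ m → m ≤ k → ∀ᵐ ω ∂P, ε ≤ p m ω)
    (g : ℕ → Ω → ℝ)
    (hg : ∀ m ω, g m ω = ∏ s ∈ Finset.Icc 1 m, p s ω)
    (Y : Ω → ℝ) (hYint : Integrable Y P)
    (phat : ℕ → Ω → ℝ)
    (hphatmeas : ∀ m, 1 ≤ m → m ≤ k → Measurable[𝒲 m] (phat m))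
    (hphatbd : ∀ m, 1 ≤ m → m ≤ k → ∀ᵐ ω ∂P, ε ≤ phat m ω ∧ phat m ω ≤ 1)
    (ghat : ℕ → Ω → ℝ)
    (hghat : ∀ m ω, ghat m ω = ∏ s ∈ Finset.Icc 1 m, phat s ω)
    (Qhat : ℕ → Ω → ℝ)
    (hQhattop : Qhat (k + 1) = Y)
    (hQhatmeas : ∀ m, 1 ≤ m → m ≤ k → Measurable[𝒲 m] (Qhat m))
    (hQhatbd : ∀ m, 1 ≤ m → m ≤ k → ∃ C, ∀ ω, |Qhat m ω| ≤ C)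
    (Qbar : ℕ → Ω → ℝ)
    (hQbarmeas : ∀ m, 1 ≤ m → m ≤ k → Measurable[𝒲 m] (Qbar m))
    (hQbarver : ∀ m, 1 ≤ m → m ≤ k → Qbar m =ᵐ[P[|B m]] (P[|B m])[Qhat (m + 1)|𝒲 m])
    :
    ∫ ω, ((∑ m ∈ Finset.Icc 1 k,
        (B m).indicator (fun ω' => (ghat m ω')⁻¹ * (Qhat (m + 1) ω' - Qhat m ω')) ω)
      + Qhat 1 ω) ∂P
    = (∑ m ∈ Finset.Icc 1 k, ∫ ω in B m, (ghat m ω)⁻¹ * (Qbar m ω - Qhat m ω) ∂P)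
      + ∫ ω, Qhat 1 ω ∂P := by
  -- σ-algebras are increasing in m
  have hW : ∀ s m : ℕ, 1 ≤ s → s ≤ m → m ≤ k → 𝒲 s ≤ 𝒲 m := by
    intro s m hs hsm hmk
    induction m with
    | zero => omega
    | succ n ih =>
      rcases Nat.lt_or_ge s (n + 1) with h | h
      · exact (ih (by omega) (by omega)).trans (h𝒲mono n (by omega) (by omega))
      · have : s = n + 1 := by omega
        subst this; exact le_rfl
  -- the events are nested
  have hBsub : ∀ n, n ≤ k → ∀ m, m ≤ n → B n ⊆ B m := by
    intro n hn
    induction n with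
    | zero => intro m hm; rw [Nat.le_zero.mp hm]
    | succ j ih =>
      intro m hm
      rcases Nat.lt_or_ge m (j + 1) with h | h
      · exact (hBmono j (by omega)).trans (ih (by omega) m (by omega))
      · have : m = j + 1 := by omega
        subst this; exact subset_rfl
  have hBpos : ∀ m, m ≤ k → 0 < P (B m) := fun m hm =>
    lt_of_lt_of_le hBk (measure_mono (hBsub k le_rfl m hm))
  -- measurability of ghat
  have hgmeas : ∀ m, 1 ≤ m → m ≤ k → Measurable[𝒲 m] (ghat m) := by
    intro m h1 h2
    have : ghat m = fun ω => ∏ s ∈ Finset.Icc 1 m, phat s ω := funext (hghat m)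
    rw [this]
    refine Finset.measurable_prod _ fun s hs => ?_
    simp only [Finset.mem_Icc] at hs
    exact (hphatmeas s hs.1 (hs.2.trans h2)).mono (hW s m hs.1 hs.2 h2) le_rfl
  -- a.e. bound on (ghat m)⁻¹
  have hgbd : ∀ m, 1 ≤ m → m ≤ k → ∀ᵐ ω ∂P, ‖(ghat m ω)⁻¹‖ ≤ ε⁻¹ ^ m := by
    intro m h1 h2
    have hall : ∀ᵐ ω ∂P, ∀ s ∈ Finset.Icc 1 m, ε ≤ phat s ω ∧ phat s ω ≤ 1 :=
      (Filter.eventually_all_finset _).mpr fun s hs => by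
        simp only [Finset.mem_Icc] at hs
        exact hphatbd s hs.1 (hs.2.trans h2)
    filter_upwards [hall] with ω hω
    have hprodpos : ε ^ m ≤ ghat m ω := by
      rw [hghat]
      calc ε ^ m = ∏ _s ∈ Finset.Icc 1 m, ε := by
            rw [Finset.prod_const, Nat.card_Icc]; norm_num
        _ ≤ ∏ s ∈ Finset.Icc 1 m, phat s ω :=
            Finset.prod_le_prod (fun s _ => le_of_lt hε) (fun s hs => (hω s hs).1)
    have hpos : 0 < ghat m ω := lt_of_lt_of_le (pow_pos hε m) hprodpos
    rw [Real.norm_eq_abs, abs_of_pos (inv_pos.mpr hpos), inv_pow]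
    exact inv_anti₀ (pow_pos hε m) hprodpos
  -- integrability of the Qhat's
  have hQint : ∀ m, 1 ≤ m → m ≤ k → Integrable (Qhat m) P := by
    intro m h1 h2
    obtain ⟨C, hC⟩ := hQhatbd m h1 h2
    exact Integrable.mono' (integrable_const C)
      ((hQhatmeas m h1 h2).mono (h𝒲le m h1 h2) le_rfl).aestronglyMeasurable
      (Filter.Eventually.of_forall fun ω => by simpa [Real.norm_eq_abs] using hC ω)
  have hQtopint : ∀ m, 1 ≤ m → m ≤ k → Integrable (Qhat (m + 1)) P := by
    intro m h1 h2
    rcases eq_or_lt_of_le h2 with h | h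
    · subst h; rw [hQhattop]; exact hYint
    · exact hQint (m + 1) (by omega) h
  have hginvmeas : ∀ m, 1 ≤ m → m ≤ k → AEStronglyMeasurable (fun ω => (ghat m ω)⁻¹) P :=
    fun m h1 h2 => (((hgmeas m h1 h2).mono (h𝒲le m h1 h2) le_rfl).inv).aestronglyMeasurable
  have hFint : ∀ m, 1 ≤ m → m ≤ k →
      Integrable (fun ω => (ghat m ω)⁻¹ * (Qhat (m + 1) ω - Qhat m ω)) P := fun m h1 h2 =>
    Integrable.bdd_mul ((hQtopint m h1 h2).sub (hQint m h1 h2)) (hginvmeas m h1 h2)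
      (hgbd m h1 h2)
  have hQ1int : Integrable (Qhat 1) P := hQint 1 le_rfl hk
  have hIndint : ∀ m ∈ Finset.Icc 1 k,
      Integrable ((B m).indicator fun ω' => (ghat m ω')⁻¹ * (Qhat (m + 1) ω' - Qhat m ω')) P := by
    intro m hm; simp only [Finset.mem_Icc] at hm
    exact (hFint m hm.1 hm.2).indicator (hBmeas m hm.2)
  rw [integral_add (integrable_finset_sum _ hIndint) hQ1int, integral_finset_sum _ hIndint]
  congr 1
  refine Finset.sum_congr rfl fun m hm => ?_
  simp only [Finset.mem_Icc] at hm
  obtain ⟨h1, h2⟩ := hm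
  rw [integral_indicator (hBmeas m h2)]
  -- now work under the conditional measure
  set μ := P[|B m] with hμdef
  have hBne : P (B m) ≠ 0 := (hBpos m h2).ne'
  haveI : IsProbabilityMeasure μ := cond_isProbabilityMeasure hBne
  have hac : μ ≪ P := cond_absolutelyContinuous
  have hcond_eq : μ = (P (B m))⁻¹ • P.restrict (B m) := rfl
  have hIP : ∀ f : Ω → ℝ, Integrable f P → Integrable f μ := by
    intro f hf
    rw [hcond_eq]
    exact hf.restrict.smul_measure (ENNReal.inv_ne_top.mpr hBne)
  have htR : (P (B m)).toReal ≠ 0 := ENNReal.toReal_ne_zero.mpr ⟨hBne, measure_ne_top P _⟩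
  have hconv : ∀ f : Ω → ℝ, ∫ ω in B m, f ω ∂P = (P (B m)).toReal * ∫ ω, f ω ∂μ := by
    intro f
    rw [hcond_eq, integral_smul_measure, ENNReal.toReal_inv, smul_eq_mul, ← mul_assoc,
      mul_inv_cancel₀ htR, one_mul]
  rw [hconv, hconv]
  congr 1
  have hm_le := h𝒲le m h1 h2
  have hXint : Integrable (Qhat (m + 1)) μ := hIP _ (hQtopint m h1 h2)
  have hQmint : Integrable (Qhat m) μ := hIP _ (hQint m h1 h2)
  have hgbdμ : ∀ᵐ ω ∂μ, ‖(ghat m ω)⁻¹‖ ≤ ε⁻¹ ^ m :=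
    Filter.Eventually.filter_mono hac.ae_le (hgbd m h1 h2)
  have hginvμ : AEStronglyMeasurable (fun ω => (ghat m ω)⁻¹) μ :=
    (((hgmeas m h1 h2).mono hm_le le_rfl).inv).aestronglyMeasurable
  have hQbarint : Integrable (Qbar m) μ := integrable_condExp.congr (hQbarver m h1 h2).symm
  have hhXint : Integrable (fun ω => (ghat m ω)⁻¹ * Qhat (m + 1) ω) μ :=
    hXint.bdd_mul hginvμ hgbdμ
  have hhQmint : Integrable (fun ω => (ghat m ω)⁻¹ * Qhat m ω) μ :=
    hQmint.bdd_mul hginvμ hgbdμ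
  have hhQbarint : Integrable (fun ω => (ghat m ω)⁻¹ * Qbar m ω) μ :=
    hQbarint.bdd_mul hginvμ hgbdμ
  simp_rw [mul_sub]
  rw [integral_sub hhXint hhQmint, integral_sub hhQbarint hhQmint]
  congr 1
  have hpull : μ[(fun ω => (ghat m ω)⁻¹) * Qhat (m + 1)|𝒲 m]
      =ᵐ[μ] (fun ω => (ghat m ω)⁻¹) * μ[Qhat (m + 1)|𝒲 m] :=
    condExp_mul_of_stronglyMeasurable_left ((hgmeas m h1 h2).inv).stronglyMeasurable hhXint hXint
  calc ∫ ω, (ghat m ω)⁻¹ * Qhat (m + 1) ω ∂μ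
      = ∫ ω, (μ[(fun ω => (ghat m ω)⁻¹) * Qhat (m + 1)|𝒲 m]) ω ∂μ :=
        (integral_condExp hm_le).symm
    _ = ∫ ω, ((fun ω => (ghat m ω)⁻¹) * μ[Qhat (m + 1)|𝒲 m]) ω ∂μ := integral_congr_ae hpull
    _ = ∫ ω, (ghat m ω)⁻¹ * Qbar m ω ∂μ := by
        refine integral_congr_ae ?_
        filter_upwards [hQbarver m h1 h2] with ω hω
        simp only [Pi.mul_apply, hω, hμdef]
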